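/- Let U be a finite set, k ≥ 54 an integer, and w : U → ℝ with 0 ≤ w(x) ≤ 1 for all x ∈ U and Σ_{x∈U} w(x) = 3k/2. Define Z = Σ_{S ⊆ U, |S| ≥ k} P^U[S] and, for u ∈ U, p(u) = w(u) · (Σ_{S ⊆ U∖{u}, |S| ≥ k−1} P^{U∖{u}}[S] · (k/(|S|+1))) / Z. Then for all u, v ∈ U: 0.2 · w(u) ≤ p(u) ≤ 1.6 · w(u), and |p(u) − p(v)| ≥ 0.2 · |w(u) − w(v)|. -/
import Mathlib


open Finset

/-- `Pw w S' S = (∏_{x∈S} w(x)) · (∏_{x∈S'∖S} (1 − w(x)))`. -/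
def Pw {α : Type*} [DecidableEq α] (w : α → ℝ) (S' S : Finset α) : ℝ :=
  (∏ x ∈ S, w x) * (∏ x ∈ S' \ S, (1 - w x))

section Aux

variable {α : Type*} [DecidableEq α]

noncomputable def Ew (w : α → ℝ) (A : Finset α) (f : ℕ → ℝ) : ℝ :=
  ∑ S ∈ A.powerset, Pw w A S * f S.card

lemma Pw_nonneg {w : α → ℝ} (hw : ∀ x, 0 ≤ w x ∧ w x ≤ 1) (S' S : Finset α) :
    0 ≤ Pw w S' S := by
  unfold Pw
  apply mul_nonneg <;> apply Finset.prod_nonneg <;> intro x _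
  · exact (hw x).1
  · linarith [(hw x).2]

lemma Pw_total (w : α → ℝ) (A : Finset α) : ∑ S ∈ A.powerset, Pw w A S = 1 := by
  rw [show (∑ S ∈ A.powerset, Pw w A S)
      = ∑ t ∈ A.powerset, (∏ i ∈ t, w i) * ∏ i ∈ A \ t, (1 - w i) from rfl,
    ← Finset.prod_add]
  simp

lemma Ew_const (w : α → ℝ) (A : Finset α) (c : ℝ) : Ew w A (fun _ => c) = c := by
  unfold Ew
  rw [← Finset.sum_mul, Pw_total, one_mul]

lemma Ew_add (w : α → ℝ) (A : Finset α) (f g : ℕ → ℝ) :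
    Ew w A (fun m => f m + g m) = Ew w A f + Ew w A g := by
  unfold Ew
  rw [← Finset.sum_add_distrib]
  exact Finset.sum_congr rfl fun S _ => by ring

lemma Ew_smul (w : α → ℝ) (A : Finset α) (c : ℝ) (f : ℕ → ℝ) :
    Ew w A (fun m => c * f m) = c * Ew w A f := by
  unfold Ew
  rw [Finset.mul_sum]
  exact Finset.sum_congr rfl fun S _ => by ring

lemma Ew_mono {w : α → ℝ} (hw : ∀ x, 0 ≤ w x ∧ w x ≤ 1) (A : Finset α) {f g : ℕ → ℝ}
    (h : ∀ m, f m ≤ g m) : Ew w A f ≤ Ew w A g := by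
  apply Finset.sum_le_sum
  intro S _
  exact mul_le_mul_of_nonneg_left (h S.card) (Pw_nonneg hw A S)

lemma Pw_insert_left {w : α → ℝ} {A : Finset α} {u : α} (hu : u ∉ A) {S : Finset α}
    (hS : S ⊆ A) : Pw w (insert u A) S = (1 - w u) * Pw w A S := by
  have huS : u ∉ S := fun h => hu (hS h)
  have huAS : u ∉ A \ S := fun h => hu (Finset.mem_sdiff.1 h).1
  unfold Pw
  rw [Finset.insert_sdiff_of_notMem _ huS, Finset.prod_insert huAS]
  ring

lemma Pw_insert_both {w : α → ℝ} {A : Finset α} {u : α} (hu : u ∉ A) {S : Finset α}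
    (hS : S ⊆ A) : Pw w (insert u A) (insert u S) = w u * Pw w A S := by
  have huS : u ∉ S := fun h => hu (hS h)
  have hset : insert u A \ insert u S = A \ S := by
    ext x
    simp only [Finset.mem_sdiff, Finset.mem_insert, not_or]
    constructor
    · rintro ⟨hx1 | hx2, hx3, hx4⟩
      · exact absurd hx1 hx3
      · exact ⟨hx2, hx4⟩
    · rintro ⟨hx, hx2⟩
      exact ⟨Or.inr hx, fun h => hu (h ▸ hx), hx2⟩
  unfold Pw
  rw [hset, Finset.prod_insert huS]
  ring

lemma Ew_insert (w : α → ℝ) {A : Finset α} {u : α} (hu : u ∉ A) (f : ℕ → ℝ) :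
    Ew w (insert u A) f = (1 - w u) * Ew w A f + w u * Ew w A (fun m => f (m + 1)) := by
  unfold Ew
  rw [Finset.sum_powerset_insert hu, Finset.mul_sum, Finset.mul_sum]
  congr 1
  · refine Finset.sum_congr rfl fun S hS => ?_
    rw [Pw_insert_left hu (Finset.mem_powerset.1 hS)]
    ring
  · refine Finset.sum_congr rfl fun S hS => ?_
    have hS' := Finset.mem_powerset.1 hS
    have huS : u ∉ S := fun h => hu (hS' h)
    rw [Pw_insert_both hu hS', Finset.card_insert_of_notMem huS]
    ring

lemma Ew_erase (w : α → ℝ) {A : Finset α} {u : α} (hu : u ∈ A) (f : ℕ → ℝ) :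
    Ew w A f = (1 - w u) * Ew w (A.erase u) f
      + w u * Ew w (A.erase u) (fun m => f (m + 1)) := by
  conv_lhs => rw [← Finset.insert_erase hu]
  exact Ew_insert w (Finset.notMem_erase u A) f

lemma Ew_mean (w : α → ℝ) (A : Finset α) :
    Ew w A (fun m => (m : ℝ)) = ∑ x ∈ A, w x := by
  induction A using Finset.induction_on with
  | empty => simp [Ew, Pw]
  | @insert a s _ ih =>
    have ha : a ∉ s := by assumption
    rw [Ew_insert w ha, Finset.sum_insert ha]
    have h2 : Ew w s (fun m => ((m + 1 : ℕ) : ℝ)) = Ew w s (fun m => (m : ℝ) + 1) := by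
      congr 1; funext m; push_cast; ring
    rw [h2, Ew_add w s (fun m => (m : ℝ)) (fun _ => 1), Ew_const, ih]
    ring

lemma Ew_var (w : α → ℝ) (A : Finset α) :
    Ew w A (fun m => ((m : ℝ) - ∑ x ∈ A, w x) ^ 2) = ∑ x ∈ A, w x * (1 - w x) := by
  induction A using Finset.induction_on with
  | empty => simp [Ew, Pw]
  | @insert a s _ ih =>
    have ha : a ∉ s := by assumption
    rw [Ew_insert w ha, Finset.sum_insert ha, Finset.sum_insert ha]
    set μ := ∑ x ∈ s, w x
    set c := w a
    set f := fun m : ℕ => ((m : ℝ) - (c + μ)) ^ 2 with hf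
    set g := fun m : ℕ => (((m + 1 : ℕ) : ℝ) - (c + μ)) ^ 2 with hg
    have h1 : Ew w s (fun m => (1 - c) * f m + c * g m)
        = Ew w s (fun m => ((m : ℝ) - μ) ^ 2) + (c - c ^ 2) := by
      have he : (fun m : ℕ => (1 - c) * f m + c * g m)
          = fun m : ℕ => ((m : ℝ) - μ) ^ 2 + (c - c ^ 2) := by
        funext m; simp only [hf, hg]; push_cast; ring
      rw [he, Ew_add, Ew_const]
    rw [Ew_add, Ew_smul, Ew_smul] at h1
    rw [ih] at h1
    linarith

lemma var_le_mean {w : α → ℝ} (hw : ∀ x, 0 ≤ w x ∧ w x ≤ 1) (A : Finset α) :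
    ∑ x ∈ A, w x * (1 - w x) ≤ ∑ x ∈ A, w x := by
  apply Finset.sum_le_sum
  intro x _
  nlinarith [(hw x).1, (hw x).2]

lemma mean_nonneg {w : α → ℝ} (hw : ∀ x, 0 ≤ w x ∧ w x ≤ 1) (A : Finset α) :
    0 ≤ ∑ x ∈ A, w x :=
  Finset.sum_nonneg fun x _ => (hw x).1

/-- Chebyshev-type bound. -/
lemma Ew_cheb {w : α → ℝ} (hw : ∀ x, 0 ≤ w x ∧ w x ≤ 1) (A : Finset α) (g : ℕ → ℝ)
    (hg0 : ∀ m, 0 ≤ g m) (hg1 : ∀ m, g m ≤ 1) (d : ℝ) (hd : 0 < d)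
    (hsupp : ∀ m, g m ≠ 0 → d ≤ |(m : ℝ) - ∑ x ∈ A, w x|) :
    Ew w A g * d ^ 2 ≤ ∑ x ∈ A, w x := by
  set μ := ∑ x ∈ A, w x
  have hpt : ∀ m, d ^ 2 * g m ≤ ((m : ℝ) - μ) ^ 2 := by
    intro m
    by_cases h : g m = 0
    · rw [h, mul_zero]; positivity
    · have h1 := hsupp m h
      have h2 : d ^ 2 ≤ ((m : ℝ) - μ) ^ 2 := by
        have := abs_nonneg ((m : ℝ) - μ)
        nlinarith [sq_abs ((m : ℝ) - μ)]
      nlinarith [hg0 m, hg1 m, sq_nonneg d]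
  calc Ew w A g * d ^ 2 = Ew w A (fun m => d ^ 2 * g m) := by rw [Ew_smul]; ring
    _ ≤ Ew w A (fun m => ((m : ℝ) - μ) ^ 2) := Ew_mono hw A hpt
    _ = ∑ x ∈ A, w x * (1 - w x) := Ew_var w A
    _ ≤ μ := var_le_mean hw A


end Aux

/-- expressiveness of the Conditioning Mechanism. For `k ≥ 54`,
weights in `[0,1]` with `Σ_{x∈U} w(x) = 3k/2`, setting
`Z = Σ_{S ⊆ U, |S| ≥ k} P^U[S]` and
`p(u) = w(u)·(Σ_{S ⊆ U∖{u}, |S| ≥ k−1} P^{U∖{u}}[S]·(k/(|S|+1)))/Z`, we have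
`0.2·w(u) ≤ p(u) ≤ 1.6·w(u)` and `|p(u) − p(v)| ≥ 0.2·|w(u) − w(v)|` for all `u, v`. -/
theorem stmt18 {α : Type*} [Fintype α] [DecidableEq α] (w : α → ℝ)
    (hw : ∀ x, 0 ≤ w x ∧ w x ≤ 1) (k : ℕ) (hk : 54 ≤ k)
    (hsum : ∑ x, w x = 3 * (k : ℝ) / 2)
    (Z : ℝ)
    (hZ : Z = ∑ S ∈ (univ : Finset α).powerset.filter (fun S => k ≤ S.card), Pw w univ S)
    (p : α → ℝ)
    (hp : ∀ u, p u = w u *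
      (∑ S ∈ ((univ : Finset α) \ {u}).powerset.filter (fun S => k - 1 ≤ S.card),
        Pw w (univ \ {u}) S * ((k : ℝ) / ((S.card : ℝ) + 1))) / Z) :
    ∀ u v : α,
      (0.2 * w u ≤ p u ∧ p u ≤ 1.6 * w u) ∧
      0.2 * |w u - w v| ≤ |p u - p v| := by
  have hK : (54 : ℝ) ≤ (k : ℝ) := by exact_mod_cast hk
  have hk1 : 1 ≤ k := by omega
  -- the functions
  set fZ : ℕ → ℝ := fun m => if k ≤ m then 1 else 0 with hfZ
  set fQ : ℕ → ℝ := fun m => if k - 1 ≤ m then (k : ℝ) / ((m : ℝ) + 1) else 0 with hfQ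
  have hfZ01 : ∀ m, 0 ≤ fZ m ∧ fZ m ≤ 1 := by
    intro m; rw [hfZ]; dsimp only; split_ifs <;> norm_num
  have hfQ0 : ∀ m, 0 ≤ fQ m := by
    intro m; rw [hfQ]; dsimp only; split_ifs
    · positivity
    · norm_num
  have hfQ1 : ∀ m, fQ m ≤ 1 := by
    intro m; rw [hfQ]; dsimp only; split_ifs with h
    · rw [div_le_one (by positivity)]
      have : k ≤ m + 1 := by omega
      have := (Nat.cast_le (α := ℝ)).2 this
      push_cast at this; linarith
    · norm_num
  -- rewrite Z and p in terms of Ew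
  have hZE : Z = Ew w univ fZ := by
    rw [hZ]; unfold Ew; rw [Finset.sum_filter]
    refine Finset.sum_congr rfl fun S _ => ?_
    by_cases h : k ≤ S.card <;> simp [hfZ, h]
  have hQE : ∀ u : α, (∑ S ∈ ((univ : Finset α) \ {u}).powerset.filter
        (fun S => k - 1 ≤ S.card),
        Pw w (univ \ {u}) S * ((k : ℝ) / ((S.card : ℝ) + 1)))
      = Ew w (univ.erase u) fQ := by
    intro u
    rw [← Finset.erase_eq]
    unfold Ew; rw [Finset.sum_filter]
    refine Finset.sum_congr rfl fun S _ => ?_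
    rw [hfQ]; dsimp only
    by_cases h : k - 1 ≤ S.card
    · rw [if_pos h, if_pos h]
    · rw [if_neg h, if_neg h, mul_zero]
  -- numeric tail helper
  have tail : ∀ X : ℝ, X * ((k : ℝ) / 2) ^ 2 ≤ 3 * (k : ℝ) / 2 → X ≤ 1 / 9 := by
    intro X hX
    nlinarith [mul_pos (show (0:ℝ) < (k : ℝ) by linarith) (show (0:ℝ) < (k : ℝ) by linarith),
      mul_nonneg (show (0:ℝ) ≤ (k : ℝ) - 54 by linarith) (show (0:ℝ) ≤ (k : ℝ) by linarith)]
  have cheb19 : ∀ (A : Finset α) (g : ℕ → ℝ), (∀ m, 0 ≤ g m) → (∀ m, g m ≤ 1) →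
      (∑ x ∈ A, w x ≤ 3 * (k : ℝ) / 2) →
      (∀ m, g m ≠ 0 → (k : ℝ) / 2 ≤ |(m : ℝ) - ∑ x ∈ A, w x|) → Ew w A g ≤ 1 / 9 := by
    intro A g hg0 hg1 hμ hs
    have h := Ew_cheb hw A g hg0 hg1 ((k : ℝ) / 2) (by linarith) hs
    exact tail _ (le_trans h hμ)
  -- Z bounds
  have hZ_le : Z ≤ 1 := by
    rw [hZE]
    calc Ew w univ fZ ≤ Ew w univ (fun _ => 1) := Ew_mono hw _ (fun m => (hfZ01 m).2)
      _ = 1 := Ew_const w univ 1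
  have hμuniv : ∑ x ∈ (univ : Finset α), w x = 3 * (k : ℝ) / 2 := hsum
  have hZ_ge : (8 : ℝ) / 9 ≤ Z := by
    set gZ : ℕ → ℝ := fun m => if m < k then 1 else 0 with hgZ
    have hsplit : Ew w univ (fun m => fZ m + gZ m) = Ew w univ fZ + Ew w univ gZ :=
      Ew_add w univ fZ gZ
    have hone : (fun m => fZ m + gZ m) = fun _ : ℕ => (1 : ℝ) := by
      funext m; rw [hfZ, hgZ]; dsimp only
      by_cases h : k ≤ m
      · rw [if_pos h, if_neg (by omega)]; norm_num
      · rw [if_neg h, if_pos (by omega)]; norm_num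
    have hgZb : Ew w univ gZ ≤ 1 / 9 := by
      apply cheb19
      · intro m; rw [hgZ]; dsimp only; split_ifs <;> norm_num
      · intro m; rw [hgZ]; dsimp only; split_ifs <;> norm_num
      · rw [hμuniv]
      · intro m hm
        rw [hgZ] at hm; dsimp only at hm
        have hmk : m < k := by by_contra h; rw [if_neg h] at hm; exact hm rfl
        have hmr : (m : ℝ) ≤ (k : ℝ) - 1 := by
          have : m + 1 ≤ k := hmk
          have := (Nat.cast_le (α := ℝ)).2 this
          push_cast at this; linarith
        rw [hμuniv]
        exact le_abs.2 (Or.inr (by linarith))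
    rw [hone, Ew_const] at hsplit
    rw [hZE]; linarith
  have hZpos : 0 < Z := by linarith
  -- general lower bound for Ew A fQ
  have hQgen : ∀ A : Finset α, 3 * (k : ℝ) / 2 - 2 ≤ ∑ x ∈ A, w x →
      ∑ x ∈ A, w x ≤ 3 * (k : ℝ) / 2 → 42 / 109 ≤ Ew w A fQ := by
    intro A hμlo hμhi
    set g1 : ℕ → ℝ := fun m => if m < k - 1 then 1 else 0 with hg1
    set g2 : ℕ → ℝ := fun m => if 2 * k < m then 1 else 0 with hg2
    set hfun : ℕ → ℝ := fun m => if k - 1 ≤ m ∧ m ≤ 2 * k then 1 else 0 with hhf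
    have hg1b : Ew w A g1 ≤ 1 / 9 := by
      apply cheb19 A g1 ?_ ?_ hμhi
      · intro m hm
        rw [hg1] at hm; dsimp only at hm
        have hmk : m < k - 1 := by by_contra h; rw [if_neg h] at hm; exact hm rfl
        have hmr : (m : ℝ) ≤ (k : ℝ) - 2 := by
          have : m + 2 ≤ k := by omega
          have := (Nat.cast_le (α := ℝ)).2 this
          push_cast at this; linarith
        exact le_abs.2 (Or.inr (by linarith))
      · intro m; rw [hg1]; dsimp only; split_ifs <;> norm_num
      · intro m; rw [hg1]; dsimp only; split_ifs <;> norm_num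
    have hg2b : Ew w A g2 ≤ 1 / 9 := by
      apply cheb19 A g2 ?_ ?_ hμhi
      · intro m hm
        rw [hg2] at hm; dsimp only at hm
        have hmk : 2 * k < m := by by_contra h; rw [if_neg h] at hm; exact hm rfl
        have hmr : 2 * (k : ℝ) + 1 ≤ (m : ℝ) := by
          have : 2 * k + 1 ≤ m := hmk
          have := (Nat.cast_le (α := ℝ)).2 this
          push_cast at this; linarith
        exact le_abs.2 (Or.inl (by linarith))
      · intro m; rw [hg2]; dsimp only; split_ifs <;> norm_num
      · intro m; rw [hg2]; dsimp only; split_ifs <;> norm_num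
    have hpart : Ew w A hfun + (Ew w A g1 + Ew w A g2) = 1 := by
      rw [← Ew_add w A g1 g2, ← Ew_add w A hfun (fun m => g1 m + g2 m)]
      have : (fun m => hfun m + (g1 m + g2 m)) = fun _ : ℕ => (1 : ℝ) := by
        funext m; rw [hhf, hg1, hg2]; dsimp only
        split_ifs <;> first | omega | norm_num
      rw [this, Ew_const]
    have hEh : 7 / 9 ≤ Ew w A hfun := by linarith
    have hc : 54 / 109 ≤ (k : ℝ) / (2 * (k : ℝ) + 1) := by
      rw [le_div_iff₀ (by linarith : (0:ℝ) < 2 * (k : ℝ) + 1)]; linarith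
    have hpt : ∀ m, (k : ℝ) / (2 * (k : ℝ) + 1) * hfun m ≤ fQ m := by
      intro m
      rw [hhf, hfQ]; dsimp only
      by_cases h : k - 1 ≤ m ∧ m ≤ 2 * k
      · rw [if_pos h, if_pos h.1, mul_one]
        have hm2k : (m : ℝ) ≤ 2 * (k : ℝ) := by
          have := (Nat.cast_le (α := ℝ)).2 h.2
          push_cast at this; linarith
        apply div_le_div_of_nonneg_left (by linarith) (by positivity) (by linarith)
      · rw [if_neg h, mul_zero]
        split_ifs
        · positivity
        · norm_num
    calc (42 : ℝ) / 109 = (54 / 109) * (7 / 9) := by norm_num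
      _ ≤ ((k : ℝ) / (2 * (k : ℝ) + 1)) * Ew w A hfun :=
          mul_le_mul hc hEh (by norm_num) (by linarith)
      _ = Ew w A (fun m => (k : ℝ) / (2 * (k : ℝ) + 1) * hfun m) := (Ew_smul w A _ hfun).symm
      _ ≤ Ew w A fQ := Ew_mono hw A hpt
  -- sums over erased sets
  have hμerase : ∀ u : α, ∑ x ∈ univ.erase u, w x = 3 * (k : ℝ) / 2 - w u := by
    intro u
    have h := Finset.add_sum_erase univ w (Finset.mem_univ u)
    rw [hμuniv] at h; linarith
  have hQu : ∀ u : α, 42 / 109 ≤ Ew w (univ.erase u) fQ := by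
    intro u
    apply hQgen <;> rw [hμerase u] <;> have := hw u <;> cases this <;> linarith
  have hQu1 : ∀ u : α, Ew w (univ.erase u) fQ ≤ 1 := by
    intro u
    calc Ew w (univ.erase u) fQ ≤ Ew w (univ.erase u) (fun _ => 1) :=
          Ew_mono hw _ (fun m => hfQ1 m)
      _ = 1 := Ew_const w _ 1
  -- main conclusion
  intro u v
  constructor
  · constructor
    · rw [hp u, hQE u, le_div_iff₀ hZpos]
      have h1 := hQu u
      have h2 := (hw u).1
      nlinarith [mul_le_mul_of_nonneg_left hZ_le h2,
        mul_le_mul_of_nonneg_left h1 h2]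
    · rw [hp u, hQE u, div_le_iff₀ hZpos]
      have h1 := hQu1 u
      have h2 := (hw u).1
      nlinarith [mul_le_mul_of_nonneg_left h1 h2,
        mul_le_mul_of_nonneg_left hZ_ge h2]
  · by_cases huv : u = v
    · subst huv; simp
    · have hvu : v ∈ univ.erase u := Finset.mem_erase.2 ⟨Ne.symm huv, Finset.mem_univ v⟩
      have huv' : u ∈ univ.erase v := Finset.mem_erase.2 ⟨huv, Finset.mem_univ u⟩
      set W : Finset α := (univ.erase u).erase v with hW
      have hdu : Ew w (univ.erase u) fQ
          = (1 - w v) * Ew w W fQ + w v * Ew w W (fun m => fQ (m + 1)) :=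
        Ew_erase w hvu fQ
      have hdv : Ew w (univ.erase v) fQ
          = (1 - w u) * Ew w W fQ + w u * Ew w W (fun m => fQ (m + 1)) := by
        rw [hW, Finset.erase_right_comm]
        exact Ew_erase w huv' fQ
      have hμW : ∑ x ∈ W, w x = 3 * (k : ℝ) / 2 - w u - w v := by
        have h := Finset.add_sum_erase (univ.erase u) w hvu
        rw [hμerase u] at h; rw [hW]; linarith
      have hE0 : 42 / 109 ≤ Ew w W fQ := by
        apply hQgen <;> rw [hμW] <;>
          have h1 := hw u <;> have h2 := hw v <;> cases h1 <;> cases h2 <;> linarith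
      have hkey : p u - p v = (w u - w v) * (Ew w W fQ / Z) := by
        rw [hp u, hp v, hQE u, hQE v, hdu, hdv]; ring
      rw [hkey, abs_mul]
      have hEZ : 0 ≤ Ew w W fQ / Z := by positivity
      rw [abs_of_nonneg hEZ]
      have h02 : (0.2 : ℝ) ≤ Ew w W fQ / Z := by
        rw [le_div_iff₀ hZpos]
        linarith
      rw [mul_comm (|w u - w v|)]
      exact mul_le_mul_of_nonneg_right h02 (abs_nonneg _)
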